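/- Let Γ be a set of subsets of a set A and define the encoding I(Q) := the downset of (ℕ^Γ, ⊑) generated by {pt(ρ) : ρ ∈ Q} for Q ⊆ DD(Γ). If Q₁, Q₂ ⊆ DD(Γ) satisfy I(Q₁) = I(Q₂), then Pol(Q₁) = Pol(Q₂); i.e., the kernel of the encoding map I is contained in the kernel of the map Q ↦ Pol(Q) on 𝒫(DD(Γ)). -/
import Mathlib

/-- The `n`-ary cross relation defined by the tuple `γ` of unary relations:
`{(x₁,…,xₙ) : x₁ ∈ γ₁ ∨ … ∨ xₙ ∈ γₙ}`. -/
def Cross {A : Type*} {n : ℕ} (γ : Fin n → Set A) : Set (Fin n → A) :=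
  {x | ∃ i, x i ∈ γ i}

/-- A finitary relation on `A`: an arity together with a set of tuples. -/
abbrev FinRel (A : Type*) := Σ n : ℕ, Set (Fin n → A)

/-- A `k`-ary operation `f` preserves an `n`-ary relation `ρ`. -/
def Preserves {A : Type*} {k n : ℕ} (f : (Fin k → A) → A) (ρ : Set (Fin n → A)) : Prop :=
  ∀ r : Fin k → Fin n → A, (∀ j, r j ∈ ρ) → (fun i => f fun j => r j i) ∈ ρ

/-- A finitary operation on `A` of positive arity `k + 1`. -/
abbrev Op (A : Type*) := Σ k : ℕ, (Fin (k + 1) → A) → A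

/-- The polymorphism clone of a set of finitary relations. -/
def Pol {A : Type*} (Q : Set (FinRel A)) : Set (Op A) :=
  {f | ∀ ρ ∈ Q, Preserves f.2 ρ.2}

/-- Relations disjunctively definable from the unary language `Γ`. -/
def DD {A : Type*} (Γ : Set (Set A)) : Set (FinRel A) :=
  {ρ | 1 ≤ ρ.1 ∧ ∃ γ : Fin ρ.1 → Set A, (∀ i, γ i ∈ Γ) ∧ ρ.2 = Cross γ}

/-- Support of a tuple of naturals. -/
def supp {I : Type*} (x : I → ℕ) : Set I := {i | x i ≠ 0}

/-- The order `⊑` on `ℕ^I`: pointwise `≤` together with equal supports. -/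
def sle {I : Type*} (x y : I → ℕ) : Prop := (∀ i, x i ≤ y i) ∧ supp x = supp y

/-- Downsets of the poset `(ℕ^I, ⊑)`. -/
def IsSleDownset {I : Type*} (X : Set (I → ℕ)) : Prop :=
  ∀ x ∈ X, ∀ y, sle y x → y ∈ X

open Classical in
/-- The canonical parameter tuple of a relation: the unique tuple of members of `Γ`
defining it as a cross if it is a proper subset of the full power, and `(A,…,A)` otherwise. -/
noncomputable def param {A : Type*} (Γ : Set (Set A)) (ρ : FinRel A) : Fin ρ.1 → Set A :=
  if ρ.2 = Set.univ then fun _ => Set.univ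
  else if h : ∃ γ : Fin ρ.1 → Set A, (∀ i, γ i ∈ Γ) ∧ ρ.2 = Cross γ then h.choose
  else fun _ => ∅

/-- The pattern of a relation: how often each `γ ∈ Γ` occurs in its canonical parameter. -/
noncomputable def pt {A : Type*} (Γ : Set (Set A)) (ρ : FinRel A) : ↥Γ → ℕ :=
  fun γ => Nat.card {i : Fin ρ.1 // param Γ ρ i = (γ : Set A)}

/-- The encoding map `I`: the downset of `(ℕ^Γ, ⊑)` generated by the patterns of `Q`. -/
def enc {A : Type*} (Γ : Set (Set A)) (Q : Set (FinRel A)) : Set (↥Γ → ℕ) :=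
  {x | ∃ ρ ∈ Q, sle x (pt Γ ρ)}

/-- `F^Inv`: the relations in `DD Γ` preserved by every operation in `F`. -/
def InvDD {A : Type*} (Γ : Set (Set A)) (F : Set (Op A)) : Set (FinRel A) :=
  {ρ | ρ ∈ DD Γ ∧ ∀ f ∈ F, Preserves f.2 ρ.2}

section Aux

open Function

/-- Auxiliary: a surjection matching fibers exists when fiber cardinalities dominate. -/
lemma exists_surj_fibers {n m : ℕ} {S : Type*} (a : Fin n → S) (b : Fin m → S)
    (hcard : ∀ j : Fin n, Nat.card {j' // a j' = a j} ≤ Nat.card {i // b i = a j})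
    (hne : ∀ i : Fin m, ∃ j, a j = b i) :
    ∃ h : Fin m → Fin n, Surjective h ∧ ∀ i, a (h i) = b i := by
  classical
  have emb : ∀ v : S, (∃ j, a j = v) → Nonempty ({j' // a j' = v} ↪ {i // b i = v}) := by
    rintro v ⟨j₀, hj₀⟩
    subst hj₀
    haveI : Fintype {j' // a j' = a j₀} := Fintype.ofFinite _
    haveI : Fintype {i // b i = a j₀} := Fintype.ofFinite _
    apply Function.Embedding.nonempty_of_card_le
    rw [← Nat.card_eq_fintype_card, ← Nat.card_eq_fintype_card]
    exact hcard j₀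
  let e : ∀ v : S, (∃ j, a j = v) → ({j' // a j' = v} ↪ {i // b i = v}) :=
    fun v hv => (emb v hv).some
  let g : Fin n → Fin m := fun j => (e (a j) ⟨j, rfl⟩ ⟨j, rfl⟩ : Fin m)
  have hbg : ∀ j, b (g j) = a j := fun j => (e (a j) ⟨j, rfl⟩ ⟨j, rfl⟩).2
  have gc : ∀ v w (hvw : v = w) (hv : ∃ j, a j = v) (hw : ∃ j, a j = w)
      (x : {j' // a j' = v}) (y : {j' // a j' = w}),
      (e v hv x : Fin m) = (e w hw y : Fin m) → (x : Fin n) = (y : Fin n) := by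
    intro v w hvw
    subst hvw
    intro hv hw x y hxy
    exact congrArg Subtype.val ((e v hv).injective (Subtype.ext hxy))
  have ginj : Injective g := by
    intro j j' hjj'
    have hv : a j = a j' := by rw [← hbg j, ← hbg j', hjj']
    exact gc (a j) (a j') hv ⟨j, rfl⟩ ⟨j', rfl⟩ ⟨j, rfl⟩ ⟨j', rfl⟩ hjj'
  refine ⟨fun i => if hyp : ∃ j, g j = i then hyp.choose else (hne i).choose, ?_, ?_⟩
  · intro j
    refine ⟨g j, ?_⟩
    have hyp : ∃ j', g j' = g j := ⟨j, rfl⟩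
    simp only [dif_pos hyp]
    exact ginj hyp.choose_spec
  · intro i
    by_cases hyp : ∃ j, g j = i
    · simp only [dif_pos hyp]
      have := hbg hyp.choose
      rw [hyp.choose_spec] at this
      exact this.symm
    · simp only [dif_neg hyp]
      exact (hne i).choose_spec

/-- Preservation transfers along a fiber-matching surjection between cross relations. -/
lemma preserves_cross {A : Type*} {n m k : ℕ} {γ : Fin n → Set A} {δ : Fin m → Set A}
    (h : Fin m → Fin n) (hsurj : Surjective h) (hδ : ∀ i, γ (h i) = δ i)
    {f : (Fin k → A) → A} (hf : Preserves f (Cross δ)) : Preserves f (Cross γ) := by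
  intro r hr
  have hr' : ∀ j, (fun i => r j (h i)) ∈ Cross δ := by
    intro j
    obtain ⟨i₀, hi₀⟩ := hr j
    obtain ⟨i, hi⟩ := hsurj i₀
    refine ⟨i, ?_⟩
    show r j (h i) ∈ δ i
    rw [← hδ i, hi]
    exact hi₀
  obtain ⟨i, hi⟩ := hf _ hr'
  refine ⟨h i, ?_⟩
  rw [hδ i]
  exact hi

lemma cross_param {A : Type*} {Γ : Set (Set A)} {ρ : FinRel A} (hρ : ρ ∈ DD Γ) :
    ρ.2 = Cross (param Γ ρ) := by
  obtain ⟨hn, γ, hγ, hcross⟩ := hρ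
  unfold param
  split_ifs with h1 h2
  · rw [h1]
    have huc : Cross (fun _ : Fin ρ.1 => (Set.univ : Set A)) = Set.univ :=
      Set.eq_univ_of_forall fun x => ⟨⟨0, hn⟩, Set.mem_univ _⟩
    exact huc.symm
  · exact h2.choose_spec.2
  · exact absurd ⟨γ, hγ, hcross⟩ h2

lemma param_univ {A : Type*} (Γ : Set (Set A)) {ρ : FinRel A} (h : ρ.2 = Set.univ) :
    param Γ ρ = fun _ => Set.univ := by
  unfold param
  rw [if_pos h]

lemma param_mem {A : Type*} {Γ : Set (Set A)} {ρ : FinRel A} (hρ : ρ ∈ DD Γ) :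
    (∀ i, param Γ ρ i ∈ Γ) ∨ (ρ.2 = Set.univ ∧ Set.univ ∉ Γ) := by
  obtain ⟨hn, γ, hγ, hcross⟩ := hρ
  by_cases h1 : ρ.2 = Set.univ
  · by_cases h2 : Set.univ ∈ Γ
    · left
      intro i
      rw [param_univ Γ h1]
      exact h2
    · right
      exact ⟨h1, h2⟩
  · left
    intro i
    unfold param
    rw [if_neg h1]
    have h2 : ∃ γ : Fin ρ.1 → Set A, (∀ i, γ i ∈ Γ) ∧ ρ.2 = Cross γ := ⟨γ, hγ, hcross⟩
    rw [dif_pos h2]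
    exact h2.choose_spec.1 i

/-- Key transfer lemma: if `pt ρ₁ ⊑ pt ρ₂` then preservation of `ρ₂` implies that of `ρ₁`. -/
lemma preserves_of_sle {A : Type*} {Γ : Set (Set A)} {ρ₁ ρ₂ : FinRel A}
    (h₁ : ρ₁ ∈ DD Γ) (h₂ : ρ₂ ∈ DD Γ) (hsle : sle (pt Γ ρ₁) (pt Γ ρ₂))
    {k : ℕ} {f : (Fin k → A) → A} (hf : Preserves f ρ₂.2) : Preserves f ρ₁.2 := by
  rcases param_mem h₁ with hp₁ | ⟨huniv, _⟩
  swap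
  · -- ρ₁.2 = univ : trivially preserved
    rw [huniv]
    intro r _
    trivial
  -- all parameters of ρ₁ lie in Γ
  set a := param Γ ρ₁ with ha
  set b := param Γ ρ₂ with hb
  have hsupp := hsle.2
  have hsuppset : ∀ γ : ↥Γ, pt Γ ρ₁ γ ≠ 0 ↔ pt Γ ρ₂ γ ≠ 0 := by
    intro γ
    constructor <;> intro hx
    · have : γ ∈ supp (pt Γ ρ₁) := hx
      rw [hsupp] at this
      exact this
    · have : γ ∈ supp (pt Γ ρ₂) := hx
      rw [← hsupp] at this
      exact this
  have hcard : ∀ j : Fin ρ₁.1, Nat.card {j' // a j' = a j} ≤ Nat.card {i // b i = a j} := by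
    intro j
    exact hsle.1 ⟨a j, hp₁ j⟩
  have hne : ∀ i : Fin ρ₂.1, ∃ j, a j = b i := by
    intro i
    rcases param_mem h₂ with hp₂ | ⟨huniv₂, hnu⟩
    · have hbne : pt Γ ρ₂ ⟨b i, hp₂ i⟩ ≠ 0 := by
        have : Nonempty {i' : Fin ρ₂.1 // param Γ ρ₂ i' = b i} := ⟨⟨i, rfl⟩⟩
        simp only [pt, Nat.card_ne_zero]
        exact ⟨this, inferInstance⟩
      have hane : pt Γ ρ₁ ⟨b i, hp₂ i⟩ ≠ 0 := (hsuppset _).2 hbne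
      rw [pt, Nat.card_ne_zero] at hane
      obtain ⟨⟨j, hj⟩⟩ := hane.1
      exact ⟨j, hj⟩
    · -- degenerate case: pattern of ρ₂ is zero everywhere, contradiction with n₁ ≥ 1
      exfalso
      obtain ⟨hn₁, -⟩ := h₁
      have j₀ : Fin ρ₁.1 := ⟨0, hn₁⟩
      have hane : pt Γ ρ₁ ⟨a j₀, hp₁ j₀⟩ ≠ 0 := by
        have : Nonempty {i' : Fin ρ₁.1 // param Γ ρ₁ i' = a j₀} := ⟨⟨j₀, rfl⟩⟩
        simp only [pt, Nat.card_ne_zero]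
        exact ⟨this, inferInstance⟩
      have hbne : pt Γ ρ₂ ⟨a j₀, hp₁ j₀⟩ ≠ 0 := (hsuppset _).1 hane
      rw [pt, Nat.card_ne_zero] at hbne
      obtain ⟨⟨i', hi'⟩⟩ := hbne.1
      rw [param_univ Γ huniv₂] at hi'
      have huv : (Set.univ : Set A) = a j₀ := hi'
      apply hnu
      rw [huv]
      exact hp₁ j₀
  obtain ⟨h, hsurj, hab⟩ := exists_surj_fibers a b hcard hne
  rw [cross_param h₁]
  rw [cross_param h₂] at hf
  exact preserves_cross h hsurj hab hf

lemma pol_subset_of_enc_subset {A : Type*} {Γ : Set (Set A)}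
    {Q₁ Q₂ : Set (FinRel A)} (hQ₁ : Q₁ ⊆ DD Γ) (hQ₂ : Q₂ ⊆ DD Γ)
    (h : enc Γ Q₁ ⊆ enc Γ Q₂) : Pol Q₂ ⊆ Pol Q₁ := by
  intro f hf ρ₁ hρ₁
  have hpt : pt Γ ρ₁ ∈ enc Γ Q₁ := ⟨ρ₁, hρ₁, fun _ => le_refl _, rfl⟩
  obtain ⟨ρ₂, hρ₂, hsle⟩ := h hpt
  exact preserves_of_sle (hQ₁ hρ₁) (hQ₂ hρ₂) hsle (hf ρ₂ hρ₂)

end Aux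

/-- The kernel of the encoding map `I` is contained in the kernel of `Q ↦ Pol Q`:
if the generated pattern downsets of `Q₁` and `Q₂` coincide, so do their
polymorphism clones. -/
theorem pol_eq_of_enc_eq {A : Type*} (Γ : Set (Set A))
    (Q₁ Q₂ : Set (FinRel A)) (hQ₁ : Q₁ ⊆ DD Γ) (hQ₂ : Q₂ ⊆ DD Γ)
    (h : enc Γ Q₁ = enc Γ Q₂) :
    Pol Q₁ = Pol Q₂ := by
  apply Set.Subset.antisymm
  · exact pol_subset_of_enc_subset hQ₂ hQ₁ h.ge
  · exact pol_subset_of_enc_subset hQ₁ hQ₂ h.le
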